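/- For every g ≥ 1, the number h_g of Apéry half-factorial numerical semigroups of genus g satisfies h_g ≥ f_{g+1}, where f_n denotes the n-th Fibonacci number (f_1 = f_2 = 1). -/

import Mathlib

/-- A numerical semigroup: a cofinite additive submonoid of ℕ. -/
def IsNumericalSemigroup (S : Set ℕ) : Prop :=
  0 ∈ S ∧ (∀ a ∈ S, ∀ b ∈ S, a + b ∈ S) ∧ (Sᶜ : Set ℕ).Finite

/-- The multiplicity: the smallest nonzero element. -/
noncomputable def mult (S : Set ℕ) : ℕ := sInf {n | n ∈ S ∧ n ≠ 0}

/-- The Apéry set of `S` with respect to `m`: elements `x ∈ S` with `x - m ∉ S`. -/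
def Apery (S : Set ℕ) (m : ℕ) : Set ℕ :=
  {x | x ∈ S ∧ ¬∃ y ∈ S, x = y + m}

/-- The atoms of `S`: nonzero elements not a sum of two nonzero elements of `S`. -/
def Atoms (S : Set ℕ) : Set ℕ :=
  {x | x ∈ S ∧ x ≠ 0 ∧ ¬∃ a ∈ S, ∃ b ∈ S, a ≠ 0 ∧ b ≠ 0 ∧ x = a + b}

/-- The set of factorization lengths of `n` over the atom set `A`. -/
def FactLens (A : Set ℕ) (n : ℕ) : Set ℕ :=
  {L | ∃ c : ℕ →₀ ℕ, (↑c.support : Set ℕ) ⊆ A ∧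
    c.sum (fun x k => k * x) = n ∧ c.sum (fun _ k => k) = L}

/-- `n` is half-factorial: all factorization lengths agree. -/
def HalfFactorial (A : Set ℕ) (n : ℕ) : Prop :=
  ∀ L₁ ∈ FactLens A n, ∀ L₂ ∈ FactLens A n, L₁ = L₂

/-- Elasticity: max factorization length over min, with `ρ(0) = 1`. -/
noncomputable def elasticity (A : Set ℕ) (n : ℕ) : ℚ :=
  if n = 0 then 1 else ((sSup (FactLens A n) : ℕ) : ℚ) / ((sInf (FactLens A n) : ℕ) : ℚ)

/-- `S` is Apéry half-factorial. -/
def AHF (S : Set ℕ) : Prop := ∀ n ∈ Apery S (mult S), HalfFactorial (Atoms S) n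

namespace AHFaux

open Finset

/-- The gap set of a depth-two numerical semigroup. -/
def Gset (k : ℕ) (B : Finset ℕ) : Finset ℕ :=
  Finset.Icc 1 k ∪ B.image (fun b => k + 2 + b)

/-- The depth-two numerical semigroup with gap set `Gset k B`. -/
def Sgp (k : ℕ) (B : Finset ℕ) : Set ℕ := (↑(Gset k B) : Set ℕ)ᶜ

lemma mem_Gset {k n : ℕ} {B : Finset ℕ} :
    n ∈ Gset k B ↔ (1 ≤ n ∧ n ≤ k) ∨ ∃ b ∈ B, k + 2 + b = n := by
  simp [Gset, Finset.mem_union, Finset.mem_Icc, Finset.mem_image]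

lemma mem_Sgp {k n : ℕ} {B : Finset ℕ} : n ∈ Sgp k B ↔ n ∉ Gset k B := by
  simp [Sgp]

lemma compl_Sgp (k : ℕ) (B : Finset ℕ) : (Sgp k B)ᶜ = ↑(Gset k B) :=
  compl_compl _

lemma zero_mem_Sgp {k : ℕ} {B : Finset ℕ} : 0 ∈ Sgp k B := by
  rw [mem_Sgp, mem_Gset]
  rintro (⟨h1, _⟩ | ⟨b, _, hb⟩) <;> omega

lemma mult_mem_Sgp {k : ℕ} {B : Finset ℕ} : k + 1 ∈ Sgp k B := by
  rw [mem_Sgp, mem_Gset]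
  rintro (⟨h1, h2⟩ | ⟨b, _, hb⟩) <;> omega

lemma ge_of_mem_Sgp {k n : ℕ} {B : Finset ℕ} (h : n ∈ Sgp k B) (hn : n ≠ 0) :
    k + 1 ≤ n := by
  by_contra h'
  exact (mem_Sgp.1 h) (mem_Gset.2 (Or.inl ⟨by omega, by omega⟩))

lemma large_mem_Sgp {k n : ℕ} {B : Finset ℕ} (hB : B ⊆ Finset.range k)
    (h : 2 * k + 2 ≤ n) : n ∈ Sgp k B := by
  rw [mem_Sgp, mem_Gset]
  rintro (⟨h1, h2⟩ | ⟨b, hb, hbe⟩)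
  · omega
  · have := Finset.mem_range.1 (hB hb); omega

lemma isNS_Sgp {k : ℕ} {B : Finset ℕ} (hB : B ⊆ Finset.range k) :
    IsNumericalSemigroup (Sgp k B) := by
  refine ⟨zero_mem_Sgp, ?_, ?_⟩
  · intro a ha b hb
    rcases eq_or_ne a 0 with rfl | ha0
    · simpa using hb
    rcases eq_or_ne b 0 with rfl | hb0
    · simpa using ha
    have h1 := ge_of_mem_Sgp ha ha0
    have h2 := ge_of_mem_Sgp hb hb0
    exact large_mem_Sgp hB (by omega)
  · rw [compl_Sgp]; exact (Gset k B).finite_toSet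

lemma genus_Sgp {k : ℕ} {B : Finset ℕ} (hB : B ⊆ Finset.range k) :
    ((Sgp k B)ᶜ : Set ℕ).ncard = k + B.card := by
  rw [compl_Sgp, Set.ncard_coe_finset, Gset, Finset.card_union_of_disjoint, Nat.card_Icc,
    Finset.card_image_of_injective _ (add_right_injective (k + 2))]
  · omega
  · rw [Finset.disjoint_left]
    intro x hx hx'
    obtain ⟨b, _, hb⟩ := Finset.mem_image.1 hx'
    have := (Finset.mem_Icc.1 hx).2
    omega

lemma mult_Sgp {k : ℕ} {B : Finset ℕ} : mult (Sgp k B) = k + 1 := by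
  have h1 : (k + 1) ∈ {n | n ∈ Sgp k B ∧ n ≠ 0} := ⟨mult_mem_Sgp, by omega⟩
  refine le_antisymm (Nat.sInf_le h1) (le_csInf ⟨_, h1⟩ ?_)
  rintro b ⟨hb, hb0⟩
  exact ge_of_mem_Sgp hb hb0

lemma factlens_multiset {A : Set ℕ} {n L : ℕ} (h : L ∈ FactLens A n) :
    ∃ M : Multiset ℕ, (∀ x ∈ M, x ∈ A) ∧ M.sum = n ∧ Multiset.card M = L := by
  obtain ⟨c, hsupp, hsum, hlen⟩ := h
  refine ⟨c.toMultiset, ?_, ?_, ?_⟩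
  · intro x hx
    exact hsupp (by rwa [Finsupp.mem_toMultiset] at hx)
  · rw [Finsupp.toMultiset_apply, Finsupp.multiset_sum_sum, ← hsum]
    refine Finsupp.sum_congr (fun x _ => ?_)
    simp [Multiset.nsmul_singleton, Multiset.sum_replicate, mul_comm]
  · rw [Finsupp.card_toMultiset, ← hlen]
    rfl

lemma ahf_Sgp {k : ℕ} {B : Finset ℕ} (hB : B ⊆ Finset.range k) :
    AHF (Sgp k B) := by
  classical
  intro n hn L1 hL1 L2 hL2
  set S := Sgp k B with hS
  rw [mult_Sgp] at hn
  obtain ⟨hnS, hnap⟩ := hn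
  have hnlt : n < 3 * k + 3 := by
    by_contra h
    push_neg at h
    exact hnap ⟨n - (k + 1), large_mem_Sgp hB (by omega), by omega⟩
  suffices H : ∀ L ∈ FactLens (Atoms S) n,
      L = if n = 0 then 0 else if n ∈ Atoms S then 1 else 2 by
    rw [H L1 hL1, H L2 hL2]
  intro L hL
  obtain ⟨M, hmem, hsumM, hcard⟩ := factlens_multiset hL
  have hbound : L * (k + 1) ≤ n := by
    calc L * (k + 1) = Multiset.card M • (k + 1) := by rw [hcard, smul_eq_mul]
    _ ≤ M.sum := Multiset.card_nsmul_le_sum (fun x hx =>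
        ge_of_mem_Sgp (hmem x hx).1 (hmem x hx).2.1)
    _ = n := hsumM
  rcases eq_or_ne n 0 with rfl | hn0
  · rw [if_pos rfl]
    have : L ≤ L * (k + 1) := Nat.le_mul_of_pos_right _ (by omega)
    omega
  rw [if_neg hn0]
  have hL0 : L ≠ 0 := by
    rintro rfl
    rw [Multiset.card_eq_zero] at hcard
    rw [hcard] at hsumM
    simp at hsumM
    exact hn0 hsumM.symm
  have hL2' : L ≤ 2 := by
    by_contra h
    push_neg at h
    have : 3 * (k + 1) ≤ L * (k + 1) := by nlinarith
    omega
  have hL1' : 1 ≤ L := Nat.one_le_iff_ne_zero.2 hL0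
  interval_cases L
  · -- L = 1 : n is an atom
    obtain ⟨a, ha⟩ := Multiset.card_eq_one.1 hcard
    subst ha
    simp only [Multiset.sum_singleton] at hsumM
    have : a ∈ Atoms S := hmem a (Multiset.mem_singleton_self a)
    rw [hsumM] at this
    rw [if_pos this]
  · -- L = 2 : n is not an atom
    obtain ⟨a, b, hab⟩ := Multiset.card_eq_two.1 hcard
    subst hab
    have hsum2 : a + b = n := by simpa using hsumM
    have ha := hmem a (by simp)
    have hb := hmem b (by simp)
    have : n ∉ Atoms S := by
      intro hnA
      exact hnA.2.2 ⟨a, ha.1, b, hb.1, ha.2.1, hb.2.1, hsum2.symm⟩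
    rw [if_neg this]

/-- The parameter set: pairs `(k, B)` with `B ⊆ range k` and `k + |B| = g`. -/
def Pg (g : ℕ) : Finset (ℕ × Finset ℕ) :=
  (Finset.range (g + 1)).biUnion fun k =>
    ((Finset.range k).powersetCard (g - k)).image fun B => (k, B)

lemma mem_Pg {g : ℕ} {p : ℕ × Finset ℕ} (hp : p ∈ Pg g) :
    p.2 ⊆ Finset.range p.1 ∧ p.1 + p.2.card = g := by
  obtain ⟨k, hk, hkp⟩ := Finset.mem_biUnion.1 hp
  obtain ⟨B, hBmem, hBe⟩ := Finset.mem_image.1 hkp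
  obtain ⟨hBsub, hBcard⟩ := Finset.mem_powersetCard.1 hBmem
  have hkg : k ≤ g := by
    have := Finset.mem_range.1 hk; omega
  subst hBe
  exact ⟨hBsub, by simp [hBcard]; omega⟩

lemma card_Pg (g : ℕ) : (Pg g).card = Nat.fib (g + 1) := by
  classical
  rw [Nat.fib_succ_eq_sum_choose, Finset.Nat.sum_antidiagonal_eq_sum_range_succ_mk, Pg,
    Finset.card_biUnion]
  · refine Finset.sum_congr rfl fun k _ => ?_
    rw [Finset.card_image_of_injective _ (fun a b h => by simpa using h),
      Finset.card_powersetCard, Finset.card_range]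
  · intro k _ k' _ hkk'
    rw [Function.onFun, Finset.disjoint_left]
    rintro ⟨a, b⟩ ha hb
    obtain ⟨B, _, hB⟩ := Finset.mem_image.1 ha
    obtain ⟨B', _, hB'⟩ := Finset.mem_image.1 hb
    apply hkk'
    have h1 : k = a := congrArg Prod.fst hB
    have h2 : k' = a := congrArg Prod.fst hB'
    omega

lemma Sgp_injOn {g : ℕ} : Set.InjOn (fun p : ℕ × Finset ℕ => Sgp p.1 p.2) ↑(Pg g) := by
  rintro ⟨k, B⟩ hp ⟨k', B'⟩ hq h
  simp only at h
  have hG : Gset k B = Gset k' B' := by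
    have := congrArg compl h
    rw [show (Sgp k B)ᶜ = ↑(Gset k B) from compl_compl _,
      show (Sgp k' B')ᶜ = ↑(Gset k' B') from compl_compl _] at this
    exact_mod_cast Finset.coe_injective this
  have hBk := (mem_Pg hp).1
  have hBk' := (mem_Pg hq).1
  have hkk' : k = k' := by
    by_contra hne
    rcases Nat.lt_or_ge k k' with hlt | hge
    · have h1 : k + 1 ∈ Gset k' B' := mem_Gset.2 (Or.inl ⟨by omega, by omega⟩)
      rw [← hG, mem_Gset] at h1
      rcases h1 with ⟨_, _⟩ | ⟨b, _, hb⟩ <;> omega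
    · have hlt : k' < k := by omega
      have h1 : k' + 1 ∈ Gset k B := mem_Gset.2 (Or.inl ⟨by omega, by omega⟩)
      rw [hG, mem_Gset] at h1
      rcases h1 with ⟨_, _⟩ | ⟨b, _, hb⟩ <;> omega
  subst hkk'
  suffices hBB : B = B' by rw [hBB]
  ext b
  constructor
  · intro hb
    have h1 : k + 2 + b ∈ Gset k B' := by
      rw [← hG]; exact mem_Gset.2 (Or.inr ⟨b, hb, rfl⟩)
    rcases mem_Gset.1 h1 with ⟨_, _⟩ | ⟨b', hb', hbe⟩
    · omega
    · have : b' = b := by omega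
      rwa [← this]
  · intro hb
    have h1 : k + 2 + b ∈ Gset k B := by
      rw [hG]; exact mem_Gset.2 (Or.inr ⟨b, hb, rfl⟩)
    rcases mem_Gset.1 h1 with ⟨_, _⟩ | ⟨b', hb', hbe⟩
    · omega
    · have : b' = b := by omega
      rwa [← this]

lemma gaps_le {S : Set ℕ} {g : ℕ} (hS : IsNumericalSemigroup S)
    (hg : (Sᶜ : Set ℕ).ncard = g) : Sᶜ ⊆ Set.Iic (2 * g) := by
  classical
  obtain ⟨h0, hadd, hfin⟩ := hS
  intro n hn
  set T := hfin.toFinset with hT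
  have hTcard : T.card = g := by
    rw [← hg, Set.ncard_eq_toFinset_card _ hfin]
  have hnT : n ∈ T := by rwa [hT, Set.Finite.mem_toFinset]
  have hn0 : n ≠ 0 := fun h => hn (h ▸ h0)
  have hA : ((Finset.Icc 1 (n - 1)).filter (· ∈ S)).card ≤ (T.erase n).card := by
    apply Finset.card_le_card_of_injOn (fun i => n - i)
    · intro i hi
      obtain ⟨hi1, hi2⟩ := Finset.mem_filter.1 hi
      obtain ⟨hile, hige⟩ := Finset.mem_Icc.1 hi1
      refine Finset.mem_erase.2 ⟨by beta_reduce; omega, ?_⟩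
      rw [hT, Set.Finite.mem_toFinset]
      intro hmem
      have : i + (n - i) ∈ S := hadd _ hi2 _ hmem
      rw [show i + (n - i) = n by omega] at this
      exact hn this
    · intro i hi j hj hij
      simp only at hij
      obtain ⟨hi1, _⟩ := Finset.mem_filter.1 hi
      obtain ⟨hj1, _⟩ := Finset.mem_filter.1 hj
      have hi2 := Finset.mem_Icc.1 hi1
      have hj2 := Finset.mem_Icc.1 hj1
      omega
  have hBc : ((Finset.Icc 1 (n - 1)).filter (· ∉ S)).card ≤ (T.erase n).card := by
    apply Finset.card_le_card
    intro i hi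
    obtain ⟨hi1, hi2⟩ := Finset.mem_filter.1 hi
    have hi3 := Finset.mem_Icc.1 hi1
    refine Finset.mem_erase.2 ⟨by omega, ?_⟩
    rw [hT, Set.Finite.mem_toFinset]
    exact hi2
  have hsplit : ((Finset.Icc 1 (n - 1)).filter (· ∈ S)).card
      + ((Finset.Icc 1 (n - 1)).filter (· ∉ S)).card = n - 1 := by
    rw [Finset.card_filter_add_card_filter_not, Nat.card_Icc]
    omega
  have herase : (T.erase n).card = g - 1 := by
    rw [Finset.card_erase_of_mem hnT, hTcard]
  have hg1 : 1 ≤ g := by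
    rw [← hTcard]
    exact Finset.card_pos.2 ⟨n, hnT⟩
  simp only [Set.mem_Iic]
  omega

end AHFaux

theorem fib_le_num_AHF (g : ℕ) (hg : 1 ≤ g) :
    Nat.fib (g + 1) ≤
      {S : Set ℕ | IsNumericalSemigroup S ∧ (Sᶜ : Set ℕ).ncard = g ∧ AHF S}.ncard := by
  classical
  set U := {S : Set ℕ | IsNumericalSemigroup S ∧ (Sᶜ : Set ℕ).ncard = g ∧ AHF S} with hU
  have hUfin : U.Finite := by
    have hsub : U ⊆ (fun S : Set ℕ => Sᶜ) ⁻¹' {t : Set ℕ | t ⊆ Set.Iic (2 * g)} := by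
      rintro S ⟨hNS, hgen, _⟩
      exact AHFaux.gaps_le hNS hgen
    refine Set.Finite.subset (Set.Finite.preimage ?_ ?_) hsub
    · exact fun a _ b _ h => compl_injective h
    · exact Set.Finite.finite_subsets (Set.finite_Iic (2 * g))
  have hmaps : ∀ p ∈ AHFaux.Pg g, (fun p : ℕ × Finset ℕ => AHFaux.Sgp p.1 p.2) p ∈ U := by
    rintro ⟨k, B⟩ hp
    obtain ⟨hBsub, hBcard⟩ := AHFaux.mem_Pg hp
    exact ⟨AHFaux.isNS_Sgp hBsub, by rw [AHFaux.genus_Sgp hBsub]; exact hBcard,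
      AHFaux.ahf_Sgp hBsub⟩
  calc Nat.fib (g + 1) = (AHFaux.Pg g).card := (AHFaux.card_Pg g).symm
    _ = (↑(AHFaux.Pg g) : Set (ℕ × Finset ℕ)).ncard := (Set.ncard_coe_finset _).symm
    _ = ((fun p : ℕ × Finset ℕ => AHFaux.Sgp p.1 p.2) '' ↑(AHFaux.Pg g)).ncard :=
        (Set.ncard_image_of_injOn AHFaux.Sgp_injOn).symm
    _ ≤ U.ncard := Set.ncard_le_ncard (by rintro _ ⟨p, hp, rfl⟩; exact hmaps p hp) hUfin
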